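/- Let 0 < α < π and let K̂_α(z) = sin((π−α)z)/sin(πz). Then K̂_α is injective on the open strip {z ∈ ℂ : −1/2 < Re z < 0} (note that sin(πz) ≠ 0 there, so K̂_α is well defined and holomorphic on this set). -/

import Mathlib

set_option maxHeartbeats 1600000

open Real

noncomputable section MellinAux
lemma mono_from_deriv {f f' : ℝ → ℝ} {a b : ℝ}
    (hd : ∀ x ∈ Set.Icc a b, HasDerivAt f (f' x) x)
    (h0 : ∀ x ∈ Set.Icc a b, 0 ≤ f' x) :
    ∀ x ∈ Set.Icc a b, f a ≤ f x := by
  intro x hx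
  have hmono : MonotoneOn f (Set.Icc a b) := by
    apply monotoneOn_of_deriv_nonneg (convex_Icc a b)
    · exact fun y hy => (hd y hy).continuousAt.continuousWithinAt
    · intro y hy
      exact ((hd y (interior_subset hy)).differentiableAt).differentiableWithinAt
    · intro y hy
      rw [(hd y (interior_subset hy)).deriv]
      exact h0 y (interior_subset hy)
  exact hmono (Set.left_mem_Icc.mpr (hx.1.trans hx.2)) hx hx.1

lemma L1 (x : ℝ) (hx : 0 ≤ x) : Real.sinh x ≤ x * Real.cosh x := by
  have h := mono_from_deriv (f := fun x => x * Real.cosh x - Real.sinh x)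
    (f' := fun x => x * Real.sinh x) (a := 0) (b := x) ?_ ?_ x (by constructor <;> simp [hx])
  · simpa using h
  · intro y _
    have := ((hasDerivAt_id y).mul (Real.hasDerivAt_cosh y)).sub (Real.hasDerivAt_sinh y)
    exact this.congr_deriv (by simp [id_eq]; try ring)
  · intro y hy; exact mul_nonneg hy.1 (Real.sinh_nonneg_iff.mpr hy.1)

lemma L2 {A B : ℝ} (hA : 0 ≤ A) (hAB : A ≤ B) : B * Real.sinh A ≤ A * Real.sinh B := by
  have h := mono_from_deriv (f := fun t => A * Real.sinh t - t * Real.sinh A)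
    (f' := fun t => A * Real.cosh t - Real.sinh A) (a := A) (b := B) ?_ ?_ B
    (by constructor <;> simp [hAB])
  · simp only [sub_self] at h; nlinarith [h]
  · intro y _
    have := ((hasDerivAt_const y A).mul (Real.hasDerivAt_sinh y)).sub
      ((hasDerivAt_id y).mul (hasDerivAt_const y (Real.sinh A)))
    exact this.congr_deriv (by simp [id_eq]; try ring)
  · intro y hy
    have h1 : Real.sinh A ≤ A * Real.cosh A := L1 A hA
    have h2 : Real.cosh A ≤ Real.cosh y := by
      rw [Real.cosh_le_cosh, abs_of_nonneg hA, abs_of_nonneg (hA.trans hy.1)]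
      exact hy.1
    have h3 : 0 ≤ A * (Real.cosh y - Real.cosh A) := mul_nonneg hA (by linarith)
    nlinarith

lemma L3 {σ : ℝ} (h0 : 0 ≤ σ) (hπ : σ ≤ π) : σ * Real.cos σ ≤ Real.sin σ := by
  have h := mono_from_deriv (f := fun t => Real.sin t - t * Real.cos t)
    (f' := fun t => t * Real.sin t) (a := 0) (b := π) ?_ ?_ σ ⟨h0, hπ⟩
  · simpa using h
  · intro y _
    have := (Real.hasDerivAt_sin y).sub ((hasDerivAt_id y).mul (Real.hasDerivAt_cos y))
    exact this.congr_deriv (by simp [id_eq]; try ring)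
  · intro y hy
    exact mul_nonneg hy.1 (Real.sin_nonneg_of_nonneg_of_le_pi hy.1 hy.2)

lemma L4 {a b : ℝ} (ha : 0 ≤ a) (hab : a ≤ b) (hb : b ≤ π) :
    a * Real.sin b ≤ b * Real.sin a := by
  have h := mono_from_deriv (f := fun t => t * Real.sin a - a * Real.sin t)
    (f' := fun t => Real.sin a - a * Real.cos t) (a := a) (b := b) ?_ ?_ b
    (by constructor <;> simp [hab])
  · simp only [sub_self] at h; nlinarith [h]
  · intro y _
    have := ((hasDerivAt_id y).mul (hasDerivAt_const y (Real.sin a))).sub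
      ((hasDerivAt_const y a).mul (Real.hasDerivAt_sin y))
    exact this.congr_deriv (by simp [id_eq]; try ring)
  · intro y hy
    have h1 : a * Real.cos a ≤ Real.sin a := L3 ha (hab.trans hb)
    have h2 : Real.cos y ≤ Real.cos a :=
      Real.cos_le_cos_of_nonneg_of_le_pi ha (hy.2.trans hb) hy.1
    have h3 : a * Real.cos y ≤ a * Real.cos a := by
      exact mul_le_mul_of_nonneg_left h2 ha
    show 0 ≤ Real.sin a - a * Real.cos y
    linarith

-- D lemma
lemma L5 {σ η : ℝ} (h0 : 0 ≤ σ) (hπ : σ ≤ π) (hη : 0 ≤ η) :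
    σ * Real.cos σ * Real.sinh η ≤ η * Real.sin σ * Real.cosh η := by
  rcases le_or_gt (Real.cos σ) 0 with hc | hc
  · have : σ * Real.cos σ * Real.sinh η ≤ 0 :=
      mul_nonpos_of_nonpos_of_nonneg (mul_nonpos_of_nonneg_of_nonpos h0 hc) (Real.sinh_nonneg_iff.mpr hη)
    have : 0 ≤ η * Real.sin σ * Real.cosh η :=
      mul_nonneg (mul_nonneg hη (Real.sin_nonneg_of_nonneg_of_le_pi h0 hπ)) (Real.cosh_pos η).le
    linarith
  · have h1 : σ * Real.cos σ ≤ Real.sin σ := L3 h0 hπ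
    have h2 : Real.sinh η ≤ η * Real.cosh η := L1 η hη
    have h3 : 0 ≤ Real.sinh η := Real.sinh_nonneg_iff.mpr hη
    have h4 : 0 ≤ Real.sin σ := Real.sin_nonneg_of_nonneg_of_le_pi h0 hπ
    nlinarith

lemma L6aux {σ : ℝ} (h0 : 0 < σ) (hπ : σ < π) (η : ℝ) (hη : 0 ≤ η) :
    0 < σ * (1 - Real.cos σ * Real.cosh η) - Real.sin σ * (Real.cosh η - Real.cos σ)
      + η * Real.sin σ * Real.sinh η := by
  have h := mono_from_deriv
    (f := fun t => σ * (1 - Real.cos σ * Real.cosh t) - Real.sin σ * (Real.cosh t - Real.cos σ)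
      + t * Real.sin σ * Real.sinh t)
    (f' := fun t => t * Real.sin σ * Real.cosh t - σ * Real.cos σ * Real.sinh t)
    (a := 0) (b := η) ?_ ?_ η ⟨hη, le_rfl⟩
  · have hsin : Real.sin σ < σ := Real.sin_lt h0
    have hc1 : Real.cos σ < 1 := by
      have hs2 : 0 < Real.sin (σ/2) := Real.sin_pos_of_pos_of_lt_pi (by linarith) (by linarith [Real.pi_pos])
      have h2m : Real.cos (2*(σ/2)) = 1 - 2 * Real.sin (σ/2)^2 := by
        rw [Real.cos_two_mul]
        nlinarith [Real.sin_sq_add_cos_sq (σ/2)]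
      rw [show 2*(σ/2) = σ by ring] at h2m
      nlinarith
    simp only [Real.cosh_zero, Real.sinh_zero, mul_zero, zero_mul, mul_one, add_zero] at h
    nlinarith
  · intro y _
    have h1 : HasDerivAt (fun t => Real.cosh t) (Real.sinh y) y := Real.hasDerivAt_cosh y
    have h2 : HasDerivAt (fun t => Real.sinh t) (Real.cosh y) y := Real.hasDerivAt_sinh y
    have := (((hasDerivAt_const y (σ * Real.cos σ)).mul h1).const_sub σ).sub
      (((h1.sub_const (Real.cos σ)).const_mul (Real.sin σ)))
    have h3 := this.add (((hasDerivAt_id y).mul_const (Real.sin σ)).mul h2)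
    convert h3 using 1
    · rfl
    · rfl
    · funext t; simp only [id_eq, Pi.add_apply, Pi.sub_apply, Pi.mul_apply]; ring
    · simp only [id_eq]; ring
  · intro y hy
    have := L5 h0.le hπ.le hy.1
    show 0 ≤ y * Real.sin σ * Real.cosh y - σ * Real.cos σ * Real.sinh y
    linarith

lemma L6 {σ : ℝ} (h0 : 0 < σ) (hπ : σ < π) (η : ℝ) :
    0 < σ * (1 - Real.cos σ * Real.cosh η) - Real.sin σ * (Real.cosh η - Real.cos σ)
      + η * Real.sin σ * Real.sinh η := by
  rcases le_or_gt 0 η with hη | hη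
  · exact L6aux h0 hπ η hη
  · have := L6aux h0 hπ (-η) (by linarith)
    rw [Real.cosh_neg, Real.sinh_neg] at this
    nlinarith [this]

lemma L7 {σ η : ℝ} (h0 : 0 ≤ σ) (hπ : σ ≤ π) (hη : 0 ≤ η) :
    Real.cos σ * Real.sinh η - Real.sinh η * Real.cosh η - η + η * Real.cos σ * Real.cosh η
      + σ * Real.sin σ * Real.sinh η ≤ 0 := by
  have h := mono_from_deriv
    (f := fun t => Real.sinh η * Real.cosh η + η
      - Real.cos t * (Real.sinh η + η * Real.cosh η) - t * Real.sin t * Real.sinh η)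
    (f' := fun t => Real.sin t * (Real.sinh η + η * Real.cosh η)
      - (Real.sin t + t * Real.cos t) * Real.sinh η)
    (a := 0) (b := π) ?_ ?_ σ ⟨h0, hπ⟩
  · simp only [Real.cos_zero, Real.sin_zero, one_mul, mul_zero, zero_mul, sub_zero] at h
    have hsh : η ≤ Real.sinh η := Real.self_le_sinh_iff.mpr hη
    have hch : 1 ≤ Real.cosh η := Real.one_le_cosh η
    nlinarith [h]
  · intro y _
    have hc : HasDerivAt (fun t => Real.cos t * (Real.sinh η + η * Real.cosh η))
        (-Real.sin y * (Real.sinh η + η * Real.cosh η)) y :=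
      (Real.hasDerivAt_cos y).mul_const _
    have hs : HasDerivAt (fun t => t * Real.sin t * Real.sinh η)
        ((Real.sin y + y * Real.cos y) * Real.sinh η) y := by
      have := ((hasDerivAt_id y).mul (Real.hasDerivAt_sin y)).mul_const (Real.sinh η)
      exact this.congr_deriv (by simp only [id_eq]; ring)
    have h3 := ((hasDerivAt_const y (Real.sinh η * Real.cosh η + η)).sub hc).sub hs
    exact h3.congr_deriv (by ring)
  · intro y hy
    have := L5 hy.1 hy.2 hη
    show 0 ≤ Real.sin y * (Real.sinh η + η * Real.cosh η) - (Real.sin y + y * Real.cos y) * Real.sinh η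
    nlinarith [this]

lemma sinRe (z : ℂ) : (Complex.sin z).re = Real.sin z.re * Real.cosh z.im := by
  rw [Complex.sin_eq]; simp [Complex.sin_ofReal_re, Complex.cosh_ofReal_re]
lemma sinIm (z : ℂ) : (Complex.sin z).im = Real.cos z.re * Real.sinh z.im := by
  rw [Complex.sin_eq]; simp [Complex.cos_ofReal_re, Complex.sinh_ofReal_re]
lemma cosRe (z : ℂ) : (Complex.cos z).re = Real.cos z.re * Real.cosh z.im := by
  rw [Complex.cos_eq]; simp [Complex.cos_ofReal_re, Complex.cosh_ofReal_re]
lemma cosIm (z : ℂ) : (Complex.cos z).im = -(Real.sin z.re * Real.sinh z.im) := by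
  rw [Complex.cos_eq]; simp [Complex.sin_ofReal_re, Complex.sinh_ofReal_re]

lemma sin_ne {c : ℝ} (hc0 : 0 < c) (hc : c ≤ π) {z : ℂ}
    (hx1 : -(1/2) < z.re) (hx2 : z.re < 0) : Complex.sin ((c : ℂ) * z) ≠ 0 := by
  rw [Complex.sin_ne_zero_iff]
  intro k hk
  have hre : c * z.re = k * π := by
    have := congrArg Complex.re hk
    simpa using this
  have hb : |c * z.re| < π := by
    rw [abs_mul, abs_of_pos hc0, abs_of_neg hx2]
    have : c * -z.re < π * (1/2) := mul_lt_mul' hc (by linarith) (by linarith) Real.pi_pos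
    linarith
  have hk0 : k = 0 := by
    by_contra hne
    have h1 : (1:ℝ) ≤ |(k:ℝ)| := by exact_mod_cast Int.one_le_abs (by exact_mod_cast hne)
    rw [hre, abs_mul, abs_of_pos Real.pi_pos] at hb
    nlinarith [Real.pi_pos]
  rw [hk0] at hre
  push_cast at hre
  have : c * z.re < 0 := mul_neg_of_pos_of_neg hc0 hx2
  linarith

lemma kappa_sign {c : ℝ} (hc0 : 0 < c) (hc : c ≤ π) {z : ℂ}
    (hx1 : -(1/2) < z.re) (hx2 : z.re < 0) :
    0 < ((Complex.cos ((c:ℂ)*z) * Complex.sin ((c:ℂ)*z) - (c:ℂ)*z) /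
        (Complex.sin ((c:ℂ)*z))^2).re ∧
    (0 ≤ z.im → ((Complex.cos ((c:ℂ)*z) * Complex.sin ((c:ℂ)*z) - (c:ℂ)*z) /
        (Complex.sin ((c:ℂ)*z))^2).im ≤ 0) := by
  set s : ℂ := (c:ℂ)*z with hs
  have hS : Complex.sin s ≠ 0 := sin_ne hc0 hc hx1 hx2
  have hS2 : (Complex.sin s)^2 ≠ 0 := pow_ne_zero 2 hS
  set w : ℂ := Complex.cos s * Complex.sin s - s with hw
  set d : ℂ := (Complex.sin s)^2 with hd
  have hcne : (starRingEnd ℂ) d ≠ 0 := by simpa using hS2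
  have key : w / d = (w * (starRingEnd ℂ) d) / ((Complex.normSq d : ℝ) : ℂ) := by
    rw [← Complex.mul_conj d, div_mul_eq_div_div_swap]
    congr 1
    rw [mul_div_assoc, div_self hcne, mul_one]
  have hnpos : 0 < Complex.normSq d := Complex.normSq_pos.mpr hS2
  set v : ℂ := 2 * s with hv
  have hvre : v.re = 2 * (c * z.re) := by simp [hv, hs]
  have hvim : v.im = 2 * (c * z.im) := by simp [hv, hs]
  set σ : ℝ := -(2 * (c * z.re)) with hσ
  set η : ℝ := 2 * (c * z.im) with hη
  have hσ0 : 0 < σ := by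
    have : c * z.re < 0 := mul_neg_of_pos_of_neg hc0 hx2
    simp only [hσ]; linarith
  have hσπ : σ < π := by
    have h1 : c * -z.re < π * (1/2) := mul_lt_mul' hc (by linarith) (by linarith) Real.pi_pos
    simp only [hσ]; linarith
  -- complex identity : 4 * (w * conj d) = (sin v - v) * (1 - cos (conj v))
  have hid : (4:ℂ) * (w * (starRingEnd ℂ) d) =
      (Complex.sin v - v) * (1 - Complex.cos ((starRingEnd ℂ) v)) := by
    have h1 : Complex.sin v = 2 * Complex.sin s * Complex.cos s := by
      rw [hv, Complex.sin_two_mul]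
    have h2 : Complex.cos v = 1 - 2 * (Complex.sin s)^2 := by
      rw [hv, Complex.cos_two_mul']
      linear_combination Complex.sin_sq_add_cos_sq s
    have h3 : Complex.cos ((starRingEnd ℂ) v) = (starRingEnd ℂ) (Complex.cos v) :=
      Complex.cos_conj v
    rw [h3, h2, hw, hd]
    simp only [map_sub, map_one, map_mul, map_pow, map_ofNat]
    rw [h1, hv]
    ring
  -- real components
  have e1 : (Complex.sin v - v).re = σ - Real.sin σ * Real.cosh η := by
    rw [Complex.sub_re, sinRe, hvre, hvim, show (2:ℝ)*(c*z.re) = -σ by rw [hσ]; ring,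
      Real.sin_neg]
    ring
  have e2 : (Complex.sin v - v).im = Real.cos σ * Real.sinh η - η := by
    rw [Complex.sub_im, sinIm, hvre, hvim, show (2:ℝ)*(c*z.re) = -σ by rw [hσ]; ring,
      Real.cos_neg]
  have e3 : (1 - Complex.cos ((starRingEnd ℂ) v)).re = 1 - Real.cos σ * Real.cosh η := by
    rw [Complex.sub_re, Complex.one_re, cosRe, Complex.conj_re, Complex.conj_im, hvre, hvim,
      show (2:ℝ)*(c*z.re) = -σ by rw [hσ]; ring, Real.cos_neg, Real.cosh_neg]
  have e4 : (1 - Complex.cos ((starRingEnd ℂ) v)).im = Real.sin σ * Real.sinh η := by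
    rw [Complex.sub_im, Complex.one_im, cosIm, Complex.conj_re, Complex.conj_im, hvre, hvim,
      show (2:ℝ)*(c*z.re) = -σ by rw [hσ]; ring, Real.sin_neg, Real.sinh_neg]
    ring
  have hre : 4 * (w * (starRingEnd ℂ) d).re =
      σ * (1 - Real.cos σ * Real.cosh η) - Real.sin σ * (Real.cosh η - Real.cos σ)
        + η * Real.sin σ * Real.sinh η := by
    have h := congrArg Complex.re hid
    have l : ((4:ℂ) * (w * (starRingEnd ℂ) d)).re = 4 * (w * (starRingEnd ℂ) d).re := by
      simp
    rw [l, Complex.mul_re (Complex.sin v - v) (1 - Complex.cos ((starRingEnd ℂ) v)), e1, e2, e3, e4] at h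
    rw [h]
    linear_combination (Real.sin σ * Real.cos σ) * Real.cosh_sq_sub_sinh_sq η
  have him : 4 * (w * (starRingEnd ℂ) d).im =
      Real.cos σ * Real.sinh η - Real.sinh η * Real.cosh η - η
        + η * Real.cos σ * Real.cosh η + σ * Real.sin σ * Real.sinh η := by
    have h := congrArg Complex.im hid
    have l : ((4:ℂ) * (w * (starRingEnd ℂ) d)).im = 4 * (w * (starRingEnd ℂ) d).im := by
      simp
    rw [l, Complex.mul_im (Complex.sin v - v) (1 - Complex.cos ((starRingEnd ℂ) v)), e1, e2, e3, e4] at h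
    rw [h]
    linear_combination (-(Real.sinh η * Real.cosh η)) * Real.sin_sq_add_cos_sq σ
  constructor
  · rw [key, Complex.div_ofReal_re]
    apply div_pos _ hnpos
    have := L6 hσ0 hσπ η
    linarith
  · intro him0
    rw [key, Complex.div_ofReal_im]
    apply div_nonpos_of_nonpos_of_nonneg _ hnpos.le
    have hη0 : 0 ≤ η := by
      rw [hη]; positivity
    have := L7 hσ0.le hσπ.le hη0
    linarith

lemma hasDerivAt_re {f : ℝ → ℂ} {f' : ℂ} {x : ℝ} (h : HasDerivAt f f' x) :
    HasDerivAt (fun t => (f t).re) f'.re x := by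
  have := Complex.reCLM.hasFDerivAt.comp_hasDerivAt x h
  exact this

lemma hasDerivAt_im {f : ℝ → ℂ} {f' : ℂ} {x : ℝ} (h : HasDerivAt f f' x) :
    HasDerivAt (fun t => (f t).im) f'.im x := by
  have := Complex.imCLM.hasFDerivAt.comp_hasDerivAt x h
  exact this

lemma F_hasDerivAt {c : ℝ} (hc0 : 0 < c) (hc : c ≤ π) {z : ℂ}
    (hx1 : -(1/2) < z.re) (hx2 : z.re < 0) :
    HasDerivAt (fun t : ℝ => (t:ℂ) * Complex.cos ((t:ℂ)*z) / Complex.sin ((t:ℂ)*z))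
      ((Complex.cos ((c:ℂ)*z) * Complex.sin ((c:ℂ)*z) - (c:ℂ)*z) /
        (Complex.sin ((c:ℂ)*z))^2) c := by
  have hS : Complex.sin ((c:ℂ)*z) ≠ 0 := sin_ne hc0 hc hx1 hx2
  have hlin : HasDerivAt (fun w : ℂ => w * z) z (c:ℂ) := by
    simpa using (hasDerivAt_id ((c:ℂ))).mul_const z
  have hcos : HasDerivAt (fun w : ℂ => Complex.cos (w*z))
      (-Complex.sin ((c:ℂ)*z) * z) (c:ℂ) := by
    simpa [Function.comp_def] using (Complex.hasDerivAt_cos ((c:ℂ)*z)).comp (c:ℂ) hlin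
  have hsin : HasDerivAt (fun w : ℂ => Complex.sin (w*z))
      (Complex.cos ((c:ℂ)*z) * z) (c:ℂ) := by
    simpa [Function.comp_def] using (Complex.hasDerivAt_sin ((c:ℂ)*z)).comp (c:ℂ) hlin
  have hnum : HasDerivAt (fun w : ℂ => w * Complex.cos (w*z))
      (1 * Complex.cos ((c:ℂ)*z) + (c:ℂ) * (-Complex.sin ((c:ℂ)*z) * z)) (c:ℂ) := by
    simpa [Pi.mul_def] using (hasDerivAt_id ((c:ℂ))).mul hcos
  have hq := hnum.div hsin hS
  have hval : ((1 * Complex.cos ((c:ℂ)*z) + (c:ℂ) * (-Complex.sin ((c:ℂ)*z) * z)) *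
        Complex.sin ((c:ℂ)*z) - (c:ℂ) * Complex.cos ((c:ℂ)*z) * (Complex.cos ((c:ℂ)*z) * z)) /
        (Complex.sin ((c:ℂ)*z))^2
      = (Complex.cos ((c:ℂ)*z) * Complex.sin ((c:ℂ)*z) - (c:ℂ)*z) /
        (Complex.sin ((c:ℂ)*z))^2 := by
    congr 1
    linear_combination (-(c:ℂ)*z) * Complex.sin_sq_add_cos_sq ((c:ℂ)*z)
  rw [hval] at hq
  exact hq.comp_ofReal

lemma W2_sign {b : ℝ} (hb0 : 0 < b) (hbπ : b < π) {z : ℂ}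
    (hx1 : -(1/2) < z.re) (hx2 : z.re < 0) :
    0 < ((π:ℂ) * Complex.cos ((π:ℝ) * z) / Complex.sin ((π:ℝ) * z)
        - (b:ℂ) * Complex.cos ((b:ℂ)*z) / Complex.sin ((b:ℂ)*z)).re ∧
    (0 ≤ z.im → ((π:ℂ) * Complex.cos ((π:ℝ) * z) / Complex.sin ((π:ℝ) * z)
        - (b:ℂ) * Complex.cos ((b:ℂ)*z) / Complex.sin ((b:ℂ)*z)).im ≤ 0) := by
  set F : ℝ → ℂ := fun t => (t:ℂ) * Complex.cos ((t:ℂ)*z) / Complex.sin ((t:ℂ)*z) with hF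
  have hder : ∀ c ∈ Set.Icc b π, HasDerivAt F
      ((Complex.cos ((c:ℂ)*z) * Complex.sin ((c:ℂ)*z) - (c:ℂ)*z) /
        (Complex.sin ((c:ℂ)*z))^2) c :=
    fun c hc => F_hasDerivAt (lt_of_lt_of_le hb0 hc.1) hc.2 hx1 hx2
  have hbπ' : b ≤ π := hbπ.le
  constructor
  · have hmono : StrictMonoOn (fun t => (F t).re) (Set.Icc b π) := by
      apply strictMonoOn_of_deriv_pos (convex_Icc b π)
      · exact fun c hc => (hasDerivAt_re (hder c hc)).continuousAt.continuousWithinAt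
      · intro c hc
        rw [interior_Icc] at hc
        rw [(hasDerivAt_re (hder c ⟨hc.1.le, hc.2.le⟩)).deriv]
        exact (kappa_sign (lt_of_lt_of_le hb0 hc.1.le) hc.2.le hx1 hx2).1
    have := hmono (Set.left_mem_Icc.mpr hbπ') (Set.right_mem_Icc.mpr hbπ') hbπ
    rw [Complex.sub_re]
    simp only [hF] at this
    push_cast
    linarith
  · intro hzim
    have hmono : AntitoneOn (fun t => (F t).im) (Set.Icc b π) := by
      apply antitoneOn_of_deriv_nonpos (convex_Icc b π)
      · exact fun c hc => (hasDerivAt_im (hder c hc)).continuousAt.continuousWithinAt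
      · intro c hc
        rw [interior_Icc] at hc
        exact (hasDerivAt_im (hder c ⟨hc.1.le, hc.2.le⟩)).differentiableAt.differentiableWithinAt
      · intro c hc
        rw [interior_Icc] at hc
        rw [(hasDerivAt_im (hder c ⟨hc.1.le, hc.2.le⟩)).deriv]
        exact (kappa_sign (lt_of_lt_of_le hb0 hc.1.le) hc.2.le hx1 hx2).2 hzim
    have := hmono (Set.left_mem_Icc.mpr hbπ') (Set.right_mem_Icc.mpr hbπ') hbπ'
    rw [Complex.sub_im]
    simp only [hF] at this
    push_cast
    linarith

lemma B2 {a b A B : ℝ} (ha : 0 < a) (hab : a ≤ b) (hb : b ≤ π) (hA : 0 ≤ A) (hAB : A ≤ B)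
    (hrel : a * B = b * A) : Real.sin b * Real.sinh A ≤ Real.sin a * Real.sinh B := by
  have hB : 0 ≤ B := hA.trans hAB
  rcases eq_or_lt_of_le hB with hB0 | hB0
  · have hA0 : A = 0 := le_antisymm (hB0 ▸ hAB) hA
    rw [hA0, ← hB0]
    simp
  · have h2 := L2 hA hAB
    have h4 := L4 ha.le hab hb
    have hsb : 0 ≤ Real.sin b := Real.sin_nonneg_of_nonneg_of_le_pi (ha.le.trans hab) hb
    have hsa : 0 ≤ Real.sin a := Real.sin_nonneg_of_nonneg_of_le_pi ha.le (hab.trans hb)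
    have hshB : 0 ≤ Real.sinh B := Real.sinh_nonneg_iff.mpr hB
    have hbb : 0 < b := ha.trans_le hab
    have c1 : b * (B * Real.sinh A) * Real.sin b ≤ b * (A * Real.sinh B) * Real.sin b := by
      have := mul_le_mul_of_nonneg_right h2 hsb
      nlinarith
    have c2 : (a * Real.sin b) * Real.sinh B * B ≤ (b * Real.sin a) * Real.sinh B * B := by
      have := mul_le_mul_of_nonneg_right (mul_le_mul_of_nonneg_right h4 hshB) hB
      exact this
    have e : b * A * (Real.sin b * Real.sinh B) = a * B * (Real.sin b * Real.sinh B) := by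
      rw [← hrel]
    have key : (b * B) * (Real.sin b * Real.sinh A) ≤ (b * B) * (Real.sin a * Real.sinh B) := by
      nlinarith [c1, c2, e]
    exact le_of_mul_le_mul_left key (by positivity)

lemma W1_sign {b : ℝ} (hb0 : 0 < b) (hbπ : b < π) {z : ℂ}
    (hx1 : -(1/2) < z.re) (hx2 : z.re < 0) (hy : 0 ≤ z.im) :
    0 < (Complex.sin ((π:ℝ) * z) * (starRingEnd ℂ) (Complex.sin ((b:ℂ)*z))).re ∧
    0 ≤ (Complex.sin ((π:ℝ) * z) * (starRingEnd ℂ) (Complex.sin ((b:ℂ)*z))).im := by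
  have hπre : (((π:ℝ):ℂ) * z).re = π * z.re := by simp
  have hπim : (((π:ℝ):ℂ) * z).im = π * z.im := by simp
  have hbre : (((b:ℝ):ℂ) * z).re = b * z.re := by simp
  have hbim : (((b:ℝ):ℂ) * z).im = b * z.im := by simp
  have hπ2 : π * z.re < 0 := mul_neg_of_pos_of_neg Real.pi_pos hx2
  have hπ1 : -(π/2) < π * z.re := by nlinarith [Real.pi_pos]
  have hb2 : b * z.re < 0 := mul_neg_of_pos_of_neg hb0 hx2
  have hb1 : -(π/2) < b * z.re := by nlinarith [Real.pi_pos]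
  have s1 : Real.sin (π * z.re) < 0 :=
    Real.sin_neg_of_neg_of_neg_pi_lt hπ2 (by nlinarith [Real.pi_pos])
  have s2 : Real.sin (b * z.re) < 0 :=
    Real.sin_neg_of_neg_of_neg_pi_lt hb2 (by nlinarith [Real.pi_pos])
  have c1 : 0 < Real.cos (π * z.re) :=
    Real.cos_pos_of_mem_Ioo ⟨by linarith, by linarith [Real.pi_pos]⟩
  have c2 : 0 < Real.cos (b * z.re) :=
    Real.cos_pos_of_mem_Ioo ⟨by linarith, by linarith [Real.pi_pos]⟩
  have sh1 : 0 ≤ Real.sinh (π * z.im) := Real.sinh_nonneg_iff.mpr (by positivity)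
  have sh2 : 0 ≤ Real.sinh (b * z.im) := Real.sinh_nonneg_iff.mpr (by positivity)
  have ch1 : 0 < Real.cosh (π * z.im) := Real.cosh_pos _
  have ch2 : 0 < Real.cosh (b * z.im) := Real.cosh_pos _
  constructor
  · rw [Complex.mul_re, Complex.conj_re, Complex.conj_im, sinRe, sinIm, sinRe, sinIm,
      hπre, hπim, hbre, hbim]
    have t0 : 0 < Real.sin (π * z.re) * Real.sin (b * z.re) := mul_pos_of_neg_of_neg s1 s2
    have t1 : Real.sin (π * z.re) * Real.cosh (π * z.im) *
        (Real.sin (b * z.re) * Real.cosh (b * z.im))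
        = (Real.sin (π * z.re) * Real.sin (b * z.re)) *
          (Real.cosh (π * z.im) * Real.cosh (b * z.im)) := by ring
    have t2 : 0 ≤ Real.cos (π * z.re) * Real.sinh (π * z.im) *
        (Real.cos (b * z.re) * Real.sinh (b * z.im)) := by positivity
    nlinarith [mul_pos t0 (mul_pos ch1 ch2)]
  · rw [Complex.mul_im, Complex.conj_re, Complex.conj_im, sinRe, sinIm, sinRe, sinIm,
      hπre, hπim, hbre, hbim]
    have key : Real.sin ((π+b) * (-z.re)) * Real.sinh ((π-b) * z.im) ≤
        Real.sin ((π-b) * (-z.re)) * Real.sinh ((π+b) * z.im) := by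
      apply B2
      · exact mul_pos (by linarith) (by linarith)
      · nlinarith [mul_pos hb0 (show (0:ℝ) < -z.re by linarith)]
      · nlinarith [mul_pos (show (0:ℝ) < π + b by linarith [Real.pi_pos])
          (show (0:ℝ) < 1/2 + z.re by linarith)]
      · exact mul_nonneg (by linarith) hy
      · nlinarith [mul_nonneg hb0.le hy]
      · ring
    rw [show (π-b) * (-z.re) = π * (-z.re) - b * (-z.re) by ring,
        show (π+b) * (-z.re) = π * (-z.re) + b * (-z.re) by ring,
        show (π-b) * z.im = π * z.im - b * z.im by ring,
        show (π+b) * z.im = π * z.im + b * z.im by ring,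
        Real.sin_sub, Real.sin_add, Real.sinh_sub, Real.sinh_add,
        show π * (-z.re) = -(π * z.re) by ring,
        show b * (-z.re) = -(b * z.re) by ring,
        Real.sin_neg, Real.cos_neg] at key
    simp only [Real.sin_neg, Real.cos_neg] at key
    nlinarith [key]

noncomputable def Dfun (b : ℝ) (z : ℂ) : ℂ :=
  ((π:ℝ) * Complex.cos ((π:ℝ) * z) * Complex.sin ((b:ℂ)*z)
    - (b:ℂ) * Complex.sin ((π:ℝ)*z) * Complex.cos ((b:ℂ)*z)) / (Complex.sin ((b:ℂ)*z))^2

lemma g_hasDerivAt {b : ℝ} (hb0 : 0 < b) (hbπ : b < π) {z : ℂ}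
    (hx1 : -(1/2) < z.re) (hx2 : z.re < 0) :
    HasDerivAt (fun w => Complex.sin ((π:ℝ)*w) / Complex.sin ((b:ℂ)*w)) (Dfun b z) z := by
  have hSb : Complex.sin ((b:ℂ)*z) ≠ 0 := sin_ne hb0 hbπ.le hx1 hx2
  have hu : HasDerivAt (fun w : ℂ => Complex.sin ((π:ℝ)*w))
      (Complex.cos ((π:ℝ)*z) * (π:ℝ)) z := by
    have hl : HasDerivAt (fun w : ℂ => ((π:ℝ):ℂ) * w) ((π:ℝ):ℂ) z := by
      simpa using (hasDerivAt_id z).const_mul (((π:ℝ)):ℂ)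
    simpa [Function.comp_def] using (Complex.hasDerivAt_sin (((π:ℝ):ℂ)*z)).comp z hl
  have hv : HasDerivAt (fun w : ℂ => Complex.sin ((b:ℂ)*w))
      (Complex.cos ((b:ℂ)*z) * (b:ℂ)) z := by
    have hl : HasDerivAt (fun w : ℂ => ((b:ℝ):ℂ) * w) ((b:ℝ):ℂ) z := by
      simpa using (hasDerivAt_id z).const_mul (((b:ℝ)):ℂ)
    simpa [Function.comp_def] using (Complex.hasDerivAt_sin (((b:ℝ):ℂ)*z)).comp z hl
  have hq := hu.div hv hSb
  have : (Complex.cos ((π:ℝ)*z) * (π:ℝ) * Complex.sin ((b:ℂ)*z)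
      - Complex.sin ((π:ℝ)*z) * (Complex.cos ((b:ℂ)*z) * (b:ℝ))) / (Complex.sin ((b:ℂ)*z))^2
      = Dfun b z := by
    rw [Dfun]; ring_nf
  rwa [this] at hq

lemma D_re_pos_aux {b : ℝ} (hb0 : 0 < b) (hbπ : b < π) {z : ℂ}
    (hx1 : -(1/2) < z.re) (hx2 : z.re < 0) (hy : 0 ≤ z.im) :
    0 < (Dfun b z).re := by
  have hSb : Complex.sin ((b:ℂ)*z) ≠ 0 := sin_ne hb0 hbπ.le hx1 hx2
  have hSπ : Complex.sin (((π:ℝ):ℂ)*z) ≠ 0 := sin_ne Real.pi_pos le_rfl hx1 hx2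
  set W1 : ℂ := Complex.sin ((π:ℝ) * z) * (starRingEnd ℂ) (Complex.sin ((b:ℂ)*z)) with hW1
  set W2 : ℂ := (π:ℂ) * Complex.cos ((π:ℝ) * z) / Complex.sin ((π:ℝ) * z)
      - (b:ℂ) * Complex.cos ((b:ℂ)*z) / Complex.sin ((b:ℂ)*z) with hW2
  have hnq : 0 < Complex.normSq (Complex.sin ((b:ℂ)*z)) := Complex.normSq_pos.mpr hSb
  have hid : Dfun b z * ((Complex.normSq (Complex.sin ((b:ℂ)*z)) : ℝ) : ℂ) = W1 * W2 := by
    rw [← Complex.mul_conj, Dfun, hW1, hW2]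
    have hSb' : Complex.sin (z*(b:ℂ)) ≠ 0 := by rwa [mul_comm]
    field_simp
  have hre := congrArg Complex.re hid
  rw [Complex.mul_re, Complex.ofReal_re, Complex.ofReal_im, mul_zero, sub_zero,
    Complex.mul_re] at hre
  have h1 := W1_sign hb0 hbπ hx1 hx2 hy
  have h2 := W2_sign hb0 hbπ hx1 hx2
  have : 0 < (Dfun b z).re * Complex.normSq (Complex.sin ((b:ℂ)*z)) := by
    rw [hre]
    have t1 : 0 < W1.re * W2.re := mul_pos h1.1 h2.1
    have t2 : W1.im * W2.im ≤ 0 := mul_nonpos_of_nonneg_of_nonpos h1.2 (h2.2 hy)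
    linarith
  nlinarith [this, hnq]

lemma D_re_pos {b : ℝ} (hb0 : 0 < b) (hbπ : b < π) {z : ℂ}
    (hx1 : -(1/2) < z.re) (hx2 : z.re < 0) :
    0 < (Dfun b z).re := by
  rcases le_or_gt 0 z.im with hy | hy
  · exact D_re_pos_aux hb0 hbπ hx1 hx2 hy
  · set z' : ℂ := (starRingEnd ℂ) z with hz'
    have hx1' : -(1/2) < z'.re := by simpa [hz'] using hx1
    have hx2' : z'.re < 0 := by simpa [hz'] using hx2
    have hy' : 0 ≤ z'.im := by simp [hz']; linarith
    have h := D_re_pos_aux hb0 hbπ hx1' hx2' hy'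
    have hc : Dfun b z' = (starRingEnd ℂ) (Dfun b z) := by
      rw [Dfun, Dfun, hz']
      rw [show ((π:ℝ):ℂ) * (starRingEnd ℂ) z = (starRingEnd ℂ) (((π:ℝ):ℂ) * z) by
        rw [map_mul, Complex.conj_ofReal],
        show ((b:ℝ):ℂ) * (starRingEnd ℂ) z = (starRingEnd ℂ) (((b:ℝ):ℂ) * z) by
        rw [map_mul, Complex.conj_ofReal]]
      rw [Complex.sin_conj, Complex.cos_conj, Complex.sin_conj, Complex.cos_conj]
      rw [map_div₀, map_sub, map_mul, map_mul, map_mul, map_mul, map_pow,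
        Complex.conj_ofReal, Complex.conj_ofReal]
    rw [hc, Complex.conj_re] at h
    exact h

end MellinAux

/-- For `0 < α < π`, the symbol `K̂_α(z) = sin((π−α)z)/sin(πz)` is injective on
the open strip `{z : −1/2 < Re z < 0}`. -/
theorem mellin_symbol_injOn_strip (α : ℝ) (hα0 : 0 < α) (hαπ : α < Real.pi) :
    Set.InjOn
      (fun z : ℂ =>
        Complex.sin (((Real.pi - α : ℝ) : ℂ) * z) / Complex.sin ((Real.pi : ℂ) * z))
      {z : ℂ | -(1 / 2) < z.re ∧ z.re < 0} := by
  set b : ℝ := π - α with hb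
  have hb0 : 0 < b := by rw [hb]; linarith
  have hbπ : b < π := by rw [hb]; linarith
  intro z1 h1 z2 h2 heq
  simp only [Set.mem_setOf_eq] at h1 h2
  by_contra hne
  -- pass to reciprocal g
  set g : ℂ → ℂ := fun w => Complex.sin ((π:ℝ)*w) / Complex.sin ((b:ℂ)*w) with hg
  have hπc : ((π : ℝ) : ℂ) = (π : ℂ) := rfl
  have hg12 : g z1 = g z2 := by
    have e1 : g z1 = (Complex.sin (((b:ℝ):ℂ) * z1) / Complex.sin (((π:ℝ):ℂ) * z1))⁻¹ := by
      rw [hg]; simp [inv_div]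
    have e2 : g z2 = (Complex.sin (((b:ℝ):ℂ) * z2) / Complex.sin (((π:ℝ):ℂ) * z2))⁻¹ := by
      rw [hg]; simp [inv_div]
    rw [e1, e2]
    exact congrArg Inv.inv heq
  -- derivative along segment
  set d : ℂ := z1 - z2 with hd
  have hdne : d ≠ 0 := by
    rw [hd]; exact sub_ne_zero.mpr hne
  set ψ : ℝ → ℝ := fun t => (g (z2 + (t:ℂ)*d) * (starRingEnd ℂ) d).re with hψ
  have hseg : ∀ t : ℝ, 0 ≤ t → t ≤ 1 → -(1/2) < (z2 + (t:ℂ)*d).re ∧ (z2 + (t:ℂ)*d).re < 0 := by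
    intro t ht0 ht1
    have : (z2 + (t:ℂ)*d).re = z2.re + t * (z1.re - z2.re) := by
      simp [hd, Complex.add_re, Complex.mul_re, Complex.sub_re]
    rw [this]
    rcases eq_or_lt_of_le ht0 with h' | h'
    · rw [← h']; simpa using h2
    constructor
    · nlinarith [mul_pos h' (show (0:ℝ) < z1.re + 1/2 by linarith [h1.1]),
        mul_nonneg (show (0:ℝ) ≤ 1 - t by linarith)
          (show (0:ℝ) ≤ z2.re + 1/2 by linarith [h2.1])]
    · nlinarith [mul_pos h' (show (0:ℝ) < -z1.re by linarith [h1.2]),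
        mul_nonneg (show (0:ℝ) ≤ 1 - t by linarith)
          (show (0:ℝ) ≤ -z2.re by linarith [h2.2])]
  have hder : ∀ t ∈ Set.Icc (0:ℝ) 1,
      HasDerivAt ψ ((Complex.normSq d) * (Dfun b (z2 + (t:ℂ)*d)).re) t := by
    intro t ht
    have hmem := hseg t ht.1 ht.2
    have hγ : HasDerivAt (fun u : ℂ => z2 + u*d) d (t:ℂ) := by
      simpa using ((hasDerivAt_id ((t:ℂ))).mul_const d).const_add z2
    have hcomp : HasDerivAt (fun u : ℂ => g (z2 + u*d)) (Dfun b (z2 + (t:ℂ)*d) * d) (t:ℂ) := by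
      have := (g_hasDerivAt hb0 hbπ hmem.1 hmem.2).comp (t:ℂ) hγ
      simpa [hg, Function.comp_def] using this
    have hreal := hcomp.comp_ofReal
    have hmul := hreal.mul_const ((starRingEnd ℂ) d)
    have hre := hasDerivAt_re hmul
    have hval : (Dfun b (z2 + (t:ℂ)*d) * d * (starRingEnd ℂ) d).re
        = (Complex.normSq d) * (Dfun b (z2 + (t:ℂ)*d)).re := by
      rw [mul_assoc, Complex.mul_conj]
      rw [Complex.mul_re, Complex.ofReal_re, Complex.ofReal_im, mul_zero, sub_zero]
      ring
    rw [hval] at hre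
    exact hre
  have hmono : StrictMonoOn ψ (Set.Icc (0:ℝ) 1) := by
    apply strictMonoOn_of_deriv_pos (convex_Icc 0 1)
    · exact fun t ht => (hder t ht).continuousAt.continuousWithinAt
    · intro t ht
      rw [interior_Icc] at ht
      rw [(hder t ⟨ht.1.le, ht.2.le⟩).deriv]
      have hmem := hseg t ht.1.le ht.2.le
      exact mul_pos (Complex.normSq_pos.mpr hdne) (D_re_pos hb0 hbπ hmem.1 hmem.2)
  have hlt : ψ 0 < ψ 1 := hmono (Set.left_mem_Icc.mpr zero_le_one)
      (Set.right_mem_Icc.mpr zero_le_one) zero_lt_one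
  have hψ0 : ψ 0 = (g z2 * (starRingEnd ℂ) d).re := by simp [hψ]
  have hψ1 : ψ 1 = (g z1 * (starRingEnd ℂ) d).re := by
    have : z2 + ((1:ℝ):ℂ)*d = z1 := by rw [hd]; push_cast; ring
    rw [hψ]; simp only [this]
  rw [hψ0, hψ1, hg12] at hlt
  exact lt_irrefl _ hlt
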